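/- For the infinite word w = x₁ (x₂)³ (x₁)⁷ (x₂)¹⁵ (x₁)³¹ (x₂)⁶³ ⋯ (alternating blocks of lengths 2^k − 1), we have EL(π₁(x₁ (x₂)³ ⋯ (x₂)^{2^{2j}−1})) = −j for every j > 1 and EL(π₂(x₁ (x₂)³ ⋯ (x₁)^{2^{2j−1}−1})) = −j for every j > 0. -/

import Mathlib

/-- The alphabet `I = {0, +, -}`. -/
inductive I : Type
  | zero | plus | minus
deriving DecidableEq, Inhabited

/-- Value of a single letter. -/
def lv : I → ℤ
  | I.zero => 0
  | I.plus => 1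
  | I.minus => -1

/-- Energy level of a finite word. -/
def EL (v : List I) : ℤ := (v.map lv).sum

/-- The prefix `w(0) ⋯ w(n-1)` of an infinite word, of length `n`. -/
def prefixWord (w : ℕ → I) (n : ℕ) : List I := (List.range n).map w

/-- `w` is safe if every nonempty prefix has nonnegative energy level. -/
def Safe (w : ℕ → I) : Prop := ∀ n : ℕ, 0 ≤ EL (prefixWord w (n + 1))

/-- `w` has a safe suffix. -/
def HasSafeSuffix (w : ℕ → I) : Prop := ∃ n : ℕ, Safe (fun k => w (n + k))

/-- The word `x₁ = (+,0)(+,-)`. -/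
def x1 : List (I × I) := [(I.plus, I.zero), (I.plus, I.minus)]

/-- The word `x₂ = (0,+)(-,+)`. -/
def x2 : List (I × I) := [(I.zero, I.plus), (I.minus, I.plus)]

/-- The `k`-th building block word: `x₁` if `k` is odd, `x₂` if `k` is even. -/
def blockWord (k : ℕ) : List (I × I) := if k % 2 = 1 then x1 else x2

/-- The `k`-th block: `2^k - 1` copies of `blockWord k`. -/
def blk (k : ℕ) : List (I × I) := (List.replicate (2 ^ k - 1) (blockWord k)).flatten

/-- Concatenation of blocks `1, …, j`, i.e. `x₁ (x₂)³ (x₁)⁷ ⋯`. -/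
def P (j : ℕ) : List (I × I) := ((List.range j).map (fun i => blk (i + 1))).flatten

lemma EL_append (a b : List I) : EL (a ++ b) = EL a + EL b := by
  simp [EL]

lemma EL_map_join_replicate (n : ℕ) (l : List (I × I)) (f : I × I → I) :
    EL (((List.replicate n l).flatten).map f) = n * EL (l.map f) := by
  induction n with
  | zero => simp [EL]
  | succ m ih =>
      rw [List.replicate_succ,
        show (l :: List.replicate m l).flatten = l ++ (List.replicate m l).flatten from rfl,
        List.map_append, EL_append, ih]
      push_cast; ring

lemma P_succ (n : ℕ) : P (n + 1) = P n ++ blk (n + 1) := by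
  simp [P, List.range_succ]

lemma EL_blk_fst (k : ℕ) :
    EL ((blk k).map Prod.fst) =
      (2 ^ k - 1 : ℤ) * (if k % 2 = 1 then 2 else -1) := by
  rw [blk, EL_map_join_replicate]
  have h : ((2 ^ k - 1 : ℕ) : ℤ) = 2 ^ k - 1 := by
    push_cast [Nat.one_le_two_pow]; ring
  rw [h, blockWord]
  by_cases hk : k % 2 = 1 <;> simp [hk, x1, x2, EL, lv]

lemma EL_blk_snd (k : ℕ) :
    EL ((blk k).map Prod.snd) =
      (2 ^ k - 1 : ℤ) * (if k % 2 = 1 then -1 else 2) := by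
  rw [blk, EL_map_join_replicate]
  have h : ((2 ^ k - 1 : ℕ) : ℤ) = 2 ^ k - 1 := by
    push_cast [Nat.one_le_two_pow]; ring
  rw [h, blockWord]
  by_cases hk : k % 2 = 1 <;> simp [hk, x1, x2, EL, lv]

lemma main1 : ∀ j : ℕ, EL ((P (2 * j)).map Prod.fst) = -(j : ℤ) := by
  intro j
  induction j with
  | zero => simp [P, EL]
  | succ m ih =>
      have e : 2 * (m + 1) = (2 * m + 1) + 1 := by ring
      rw [e, P_succ, P_succ, List.map_append, List.map_append, EL_append,
        EL_append, ih, EL_blk_fst, EL_blk_fst]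
      have h1 : (2 * m + 1) % 2 = 1 := by omega
      have h2 : (2 * m + 1 + 1) % 2 = 0 := by omega
      rw [h1, h2]
      norm_num
      have : (2 : ℤ) ^ (2 * m + 1 + 1) = 2 * 2 ^ (2 * m + 1) := by ring
      rw [this]; push_cast; ring

lemma main2 : ∀ j : ℕ, EL ((P (2 * j + 1)).map Prod.snd) = -((j : ℤ) + 1) := by
  intro j
  induction j with
  | zero =>
      simp [P, blk, blockWord, x1, EL, lv, List.range_succ]
  | succ m ih =>
      have e : 2 * (m + 1) + 1 = (2 * m + 1 + 1) + 1 := by ring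
      rw [e, P_succ, P_succ, List.map_append, List.map_append, EL_append,
        EL_append, ih, EL_blk_snd, EL_blk_snd]
      have h1 : (2 * m + 1 + 1) % 2 = 0 := by omega
      have h2 : (2 * m + 1 + 1 + 1) % 2 = 1 := by omega
      rw [h1, h2]
      norm_num
      have : (2 : ℤ) ^ (2 * m + 1 + 1 + 1) = 2 * 2 ^ (2 * m + 1 + 1) := by ring
      rw [this]; push_cast; ring

theorem energy_of_wss_prefixes :
    (∀ j : ℕ, 1 < j → EL ((P (2 * j)).map Prod.fst) = -(j : ℤ)) ∧
    (∀ j : ℕ, 0 < j → EL ((P (2 * j - 1)).map Prod.snd) = -(j : ℤ)) := by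
  constructor
  · intro j _; exact main1 j
  · intro j hj
    obtain ⟨m, rfl⟩ := Nat.exists_eq_add_of_lt hj
    have e : 2 * (m + 1) - 1 = 2 * m + 1 := by omega
    rw [show (0 : ℕ) + m + 1 = m + 1 by omega] at *
    rw [e, main2 m]; push_cast; ring
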